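/- arXiv:2305.08104 — 4 statements merged into one kernel-verified Lean document; each statement's English description precedes it below -/
import Mathlib

section
/- For every θ ∈ ℝ^m, the steady-state TD direction satisfies ⟨θ* − θ, ḡ(θ)⟩ ≥ ω(1−γ)·‖θ* − θ‖₂². -/
open MeasureTheory ProbabilityTheory Finset
open scoped RealInnerProductSpace ProbabilityTheory

noncomputable section

/-- The TD update direction `g(θ, o)` for an observation tuple `o = (s, r, s')`:
`g(θ, o) = (r + γ⟪φ s', θ⟫ - ⟪φ s, θ⟫) • φ s`. -/
def tdDir {S : Type*} {m : ℕ} (γ : ℝ) (φ : S → EuclideanSpace ℝ (Fin m))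
    (θ : EuclideanSpace ℝ (Fin m)) (o : S × ℝ × S) : EuclideanSpace ℝ (Fin m) :=
  (o.2.1 + γ * ⟪φ o.2.2, θ⟫ - ⟪φ o.1, θ⟫) • φ o.1

/-- The steady-state TD direction `ḡ(θ) = ∑ s, π s • ∑ s', P s s' • g(θ, (s, R s, s'))`. -/
def tdBar {S : Type*} [Fintype S] {m : ℕ} (γ : ℝ) (φ : S → EuclideanSpace ℝ (Fin m))
    (P : S → S → ℝ) (pidist : S → ℝ) (R : S → ℝ) (θ : EuclideanSpace ℝ (Fin m)) :
    EuclideanSpace ℝ (Fin m) :=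
  ∑ st : S, ∑ st' : S, (pidist st * P st st') • tdDir γ φ θ (st, R st, st')

/-- For every `θ`, `⟪θ* - θ, ḡ θ⟫ ≥ ω (1 - γ) ‖θ* - θ‖²`. -/
theorem stmt0
    {S : Type*} [Fintype S] [Nonempty S] {m : ℕ}
    (γ : ℝ) (hγ : γ ∈ Set.Ioo (0 : ℝ) 1)
    (φ : S → EuclideanSpace ℝ (Fin m)) (hφ : ∀ st : S, ‖φ st‖ ≤ 1)
    (hrank : Function.Injective fun θ : EuclideanSpace ℝ (Fin m) => fun st : S => ⟪φ st, θ⟫)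
    (P : S → S → ℝ) (hP0 : ∀ st st' : S, 0 ≤ P st st')
    (hP1 : ∀ st : S, ∑ st' : S, P st st' = 1)
    (pidist : S → ℝ) (hpi0 : ∀ st : S, 0 < pidist st) (hpi1 : ∑ st : S, pidist st = 1)
    (hstat : ∀ st' : S, ∑ st : S, pidist st * P st st' = pidist st')
    (R : S → ℝ) (rbar : ℝ) (hrbar : 0 < rbar) (hR : ∀ st : S, |R st| ≤ rbar)
    (ω : ℝ) (hω : ω ∈ Set.Ioo (0 : ℝ) 1)
    (hωmin : ∀ θ : EuclideanSpace ℝ (Fin m), ω * ‖θ‖ ^ 2 ≤ ∑ st : S, pidist st * ⟪φ st, θ⟫ ^ 2)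
    (θstar : EuclideanSpace ℝ (Fin m)) (hθstar : tdBar γ φ P pidist R θstar = 0)
    (σ : ℝ) (hσ : σ = max 1 (max rbar ‖θstar‖))
    :
    ∀ θ : EuclideanSpace ℝ (Fin m),
      ω * (1 - γ) * ‖θstar - θ‖ ^ 2 ≤ ⟪θstar - θ, tdBar γ φ P pidist R θ⟫ := by
  intro θ
  obtain ⟨hγ0, hγ1⟩ := hγ
  set u := θstar - θ with hu
  set x : S → ℝ := fun st => ⟪φ st, u⟫ with hx
  have key : ⟪u, tdBar γ φ P pidist R θ⟫ =
      ∑ st : S, ∑ st' : S, pidist st * P st st' *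
        ((x st - γ * x st') * x st) := by
    have h0 : ⟪u, tdBar γ φ P pidist R θstar⟫ = (0 : ℝ) := by
      rw [hθstar]; simp
    have heq : ⟪u, tdBar γ φ P pidist R θ⟫
        = ⟪u, tdBar γ φ P pidist R θ⟫ - ⟪u, tdBar γ φ P pidist R θstar⟫ := by
      rw [h0]; ring
    rw [heq]
    unfold tdBar tdDir
    simp only [inner_sum, real_inner_smul_right, ← Finset.sum_sub_distrib]
    refine Finset.sum_congr rfl fun st _ => Finset.sum_congr rfl fun st' _ => ?_
    have h1 : x st = ⟪φ st, θstar⟫ - ⟪φ st, θ⟫ := by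
      simp [hx, hu, inner_sub_right]
    have h2 : x st' = ⟪φ st', θstar⟫ - ⟪φ st', θ⟫ := by
      simp [hx, hu, inner_sub_right]
    have h3 : ⟪u, φ st⟫ = x st := real_inner_comm _ _
    rw [h3, h1, h2]
    ring
  have hA : ∑ st : S, ∑ st' : S, pidist st * P st st' * (x st)^2
      = ∑ st : S, pidist st * (x st)^2 := by
    refine Finset.sum_congr rfl fun st _ => ?_
    rw [← Finset.sum_mul]
    rw [show ∑ st' : S, pidist st * P st st' = pidist st * ∑ st' : S, P st st' by
      rw [Finset.mul_sum]]
    rw [hP1 st, mul_one]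
  have hA' : ∑ st : S, ∑ st' : S, pidist st * P st st' * (x st')^2
      = ∑ st : S, pidist st * (x st)^2 := by
    rw [Finset.sum_comm]
    refine Finset.sum_congr rfl fun st' _ => ?_
    rw [show ∑ st : S, pidist st * P st st' * (x st')^2
        = (∑ st : S, pidist st * P st st') * (x st')^2 by rw [Finset.sum_mul]]
    rw [hstat st']
  have hB : ∑ st : S, ∑ st' : S, pidist st * P st st' * (x st' * x st)
      ≤ ∑ st : S, pidist st * (x st)^2 := by
    have : ∑ st : S, ∑ st' : S, pidist st * P st st' * (x st' * x st)
        ≤ ∑ st : S, ∑ st' : S, pidist st * P st st' * (((x st)^2 + (x st')^2)/2) := by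
      refine Finset.sum_le_sum fun st _ => Finset.sum_le_sum fun st' _ => ?_
      refine mul_le_mul_of_nonneg_left ?_ (mul_nonneg (hpi0 st).le (hP0 st st'))
      nlinarith [sq_nonneg (x st - x st')]
    calc _ ≤ _ := this
      _ = ∑ st : S, pidist st * (x st)^2 := by
          have : ∑ st : S, ∑ st' : S, pidist st * P st st' * (((x st)^2 + (x st')^2)/2)
              = ((∑ st : S, ∑ st' : S, pidist st * P st st' * (x st)^2)
                + (∑ st : S, ∑ st' : S, pidist st * P st st' * (x st')^2))/2 := by
            rw [← Finset.sum_add_distrib]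
            rw [Finset.sum_div]
            refine Finset.sum_congr rfl fun st _ => ?_
            rw [← Finset.sum_add_distrib, Finset.sum_div]
            refine Finset.sum_congr rfl fun st' _ => ?_
            ring
          rw [this, hA, hA']
          ring
  have hkey2 : (1 - γ) * ∑ st : S, pidist st * (x st)^2
      ≤ ⟪u, tdBar γ φ P pidist R θ⟫ := by
    rw [key]
    have expand : ∑ st : S, ∑ st' : S, pidist st * P st st' * ((x st - γ * x st') * x st)
        = (∑ st : S, ∑ st' : S, pidist st * P st st' * (x st)^2)
          - γ * ∑ st : S, ∑ st' : S, pidist st * P st st' * (x st' * x st) := by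
      rw [Finset.mul_sum, ← Finset.sum_sub_distrib]
      refine Finset.sum_congr rfl fun st _ => ?_
      rw [Finset.mul_sum, ← Finset.sum_sub_distrib]
      refine Finset.sum_congr rfl fun st' _ => ?_
      ring
    rw [expand, hA]
    nlinarith [hB]
  have hfinal : ω * ‖u‖^2 ≤ ∑ st : S, pidist st * (x st)^2 := hωmin u
  have h1γ : (0:ℝ) < 1 - γ := by linarith
  calc ω * (1 - γ) * ‖u‖ ^ 2 = (1 - γ) * (ω * ‖u‖^2) := by ring
    _ ≤ (1 - γ) * ∑ st : S, pidist st * (x st)^2 :=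
        mul_le_mul_of_nonneg_left hfinal h1γ.le
    _ ≤ _ := hkey2
end
end

section
/- The mean-path TD recursion converges exponentially fast to θ*: if 0 < α ≤ ω(1−γ)/4 and the deterministic sequence (θ_k) satisfies θ_{k+1} = θ_k + α·ḡ(θ_k), then for every k ≥ 0, ‖θ_{k+1} − θ*‖₂² ≤ (1 − αω(1−γ))·‖θ_k − θ*‖₂², and hence ‖θ_k − θ*‖₂² ≤ (1 − αω(1−γ))^k·‖θ_0 − θ*‖₂². -/
open MeasureTheory ProbabilityTheory Finset
open scoped RealInnerProductSpace ProbabilityTheory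

noncomputable section

/-- The linear part of the TD direction. -/
def Lmap {S : Type*} [Fintype S] {m : ℕ} (γ : ℝ) (φ : S → EuclideanSpace ℝ (Fin m))
    (P : S → S → ℝ) (pidist : S → ℝ) (u : EuclideanSpace ℝ (Fin m)) :
    EuclideanSpace ℝ (Fin m) :=
  ∑ st : S, ∑ st' : S,
    (pidist st * P st st' * (γ * ⟪φ st', u⟫ - ⟪φ st, u⟫)) • φ st

lemma tdBar_eq_add_Lmap {S : Type*} [Fintype S] {m : ℕ} (γ : ℝ)
    (φ : S → EuclideanSpace ℝ (Fin m)) (P : S → S → ℝ) (pidist : S → ℝ) (R : S → ℝ)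
    (θ θ' : EuclideanSpace ℝ (Fin m)) :
    tdBar γ φ P pidist R θ = tdBar γ φ P pidist R θ' + Lmap γ φ P pidist (θ - θ') := by
  simp only [tdBar, Lmap, tdDir, ← Finset.sum_add_distrib]
  refine Finset.sum_congr rfl fun st _ => Finset.sum_congr rfl fun st' _ => ?_
  rw [inner_sub_right, inner_sub_right, smul_smul, smul_smul, ← add_smul]
  congr 1
  ring

/-- Cauchy–Schwarz style cross bound using stationarity. -/
lemma cross_bound {S : Type*} [Fintype S] (P : S → S → ℝ) (hP0 : ∀ st st' : S, 0 ≤ P st st')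
    (hP1 : ∀ st : S, ∑ st' : S, P st st' = 1)
    (pidist : S → ℝ) (hpi0 : ∀ st : S, 0 ≤ pidist st)
    (hstat : ∀ st' : S, ∑ st : S, pidist st * P st st' = pidist st')
    (x : S → ℝ) :
    ∑ st : S, ∑ st' : S, pidist st * P st st' * (x st * x st')
      ≤ ∑ st : S, pidist st * x st ^ 2 := by
  set B : ℝ := ∑ st : S, pidist st * x st ^ 2 with hB
  have hBnn : 0 ≤ B :=
    Finset.sum_nonneg fun st _ => mul_nonneg (hpi0 st) (sq_nonneg _)
  have hw : ∀ p : S × S, 0 ≤ pidist p.1 * P p.1 p.2 :=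
    fun p => mul_nonneg (hpi0 _) (hP0 _ _)
  have hcs := Finset.sum_mul_sq_le_sq_mul_sq Finset.univ
    (fun p : S × S => Real.sqrt (pidist p.1 * P p.1 p.2) * x p.1)
    (fun p : S × S => Real.sqrt (pidist p.1 * P p.1 p.2) * x p.2)
  have e1 : ∀ p : S × S,
      (Real.sqrt (pidist p.1 * P p.1 p.2) * x p.1) *
        (Real.sqrt (pidist p.1 * P p.1 p.2) * x p.2)
        = pidist p.1 * P p.1 p.2 * (x p.1 * x p.2) := by
    intro p
    rw [mul_mul_mul_comm, Real.mul_self_sqrt (hw p)]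
  have e2 : ∀ p : S × S,
      (Real.sqrt (pidist p.1 * P p.1 p.2) * x p.1) ^ 2
        = pidist p.1 * P p.1 p.2 * x p.1 ^ 2 := by
    intro p; rw [mul_pow, Real.sq_sqrt (hw p)]
  have e3 : ∀ p : S × S,
      (Real.sqrt (pidist p.1 * P p.1 p.2) * x p.2) ^ 2
        = pidist p.1 * P p.1 p.2 * x p.2 ^ 2 := by
    intro p; rw [mul_pow, Real.sq_sqrt (hw p)]
  simp only [e1, e2, e3] at hcs
  have s1 : ∑ p : S × S, pidist p.1 * P p.1 p.2 * x p.1 ^ 2 = B := by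
    rw [Fintype.sum_prod_type]
    refine Finset.sum_congr rfl fun st _ => ?_
    have : ∀ st' : S, pidist st * P st st' * x st ^ 2
        = pidist st * x st ^ 2 * P st st' := fun st' => by ring
    simp only [this, ← Finset.mul_sum, hP1, mul_one]
  have s2 : ∑ p : S × S, pidist p.1 * P p.1 p.2 * x p.2 ^ 2 = B := by
    rw [Fintype.sum_prod_type, Finset.sum_comm]
    refine Finset.sum_congr rfl fun st' _ => ?_
    have : ∀ st : S, pidist st * P st st' * x st' ^ 2
        = x st' ^ 2 * (pidist st * P st st') := fun st => by ring
    simp only [this, ← Finset.mul_sum, hstat st']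
    ring
  rw [s1, s2] at hcs
  have s0 : ∑ p : S × S, pidist p.1 * P p.1 p.2 * (x p.1 * x p.2)
      = ∑ st : S, ∑ st' : S, pidist st * P st st' * (x st * x st') := by
    rw [Fintype.sum_prod_type]
  rw [s0] at hcs
  nlinarith [hcs, hBnn]

set_option maxHeartbeats 1000000 in
/-- The mean-path TD recursion converges exponentially fast to `θ*`. -/
theorem stmt3
    {S : Type*} [Fintype S] [Nonempty S] {m : ℕ}
    (γ : ℝ) (hγ : γ ∈ Set.Ioo (0 : ℝ) 1)
    (φ : S → EuclideanSpace ℝ (Fin m)) (hφ : ∀ st : S, ‖φ st‖ ≤ 1)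
    (hrank : Function.Injective fun θ : EuclideanSpace ℝ (Fin m) => fun st : S => ⟪φ st, θ⟫)
    (P : S → S → ℝ) (hP0 : ∀ st st' : S, 0 ≤ P st st')
    (hP1 : ∀ st : S, ∑ st' : S, P st st' = 1)
    (pidist : S → ℝ) (hpi0 : ∀ st : S, 0 < pidist st) (hpi1 : ∑ st : S, pidist st = 1)
    (hstat : ∀ st' : S, ∑ st : S, pidist st * P st st' = pidist st')
    (R : S → ℝ) (rbar : ℝ) (hrbar : 0 < rbar) (hR : ∀ st : S, |R st| ≤ rbar)
    (ω : ℝ) (hω : ω ∈ Set.Ioo (0 : ℝ) 1)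
    (hωmin : ∀ θ : EuclideanSpace ℝ (Fin m), ω * ‖θ‖ ^ 2 ≤ ∑ st : S, pidist st * ⟪φ st, θ⟫ ^ 2)
    (θstar : EuclideanSpace ℝ (Fin m)) (hθstar : tdBar γ φ P pidist R θstar = 0)
    (σ : ℝ) (hσ : σ = max 1 (max rbar ‖θstar‖))
    (α : ℝ) (hαpos : 0 < α) (hα : α ≤ ω * (1 - γ) / 4)
    (θseq : ℕ → EuclideanSpace ℝ (Fin m))
    (hrec : ∀ k : ℕ, θseq (k + 1) = θseq k + α • tdBar γ φ P pidist R (θseq k)) :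
    (∀ k : ℕ, ‖θseq (k + 1) - θstar‖ ^ 2
        ≤ (1 - α * ω * (1 - γ)) * ‖θseq k - θstar‖ ^ 2) ∧
    (∀ k : ℕ, ‖θseq k - θstar‖ ^ 2
        ≤ (1 - α * ω * (1 - γ)) ^ k * ‖θseq 0 - θstar‖ ^ 2) := by
  obtain ⟨hγ0, hγ1⟩ := hγ
  obtain ⟨hω0, hω1⟩ := hω
  -- inner product bound for Lmap
  have hinner : ∀ u : EuclideanSpace ℝ (Fin m),
      ⟪Lmap γ φ P pidist u, u⟫ ≤ -((1 - γ) * (ω * ‖u‖ ^ 2)) := by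
    intro u
    set x : S → ℝ := fun st => ⟪φ st, u⟫ with hx
    have hcalc : ⟪Lmap γ φ P pidist u, u⟫
        = γ * (∑ st : S, ∑ st' : S, pidist st * P st st' * (x st * x st'))
          - ∑ st : S, pidist st * x st ^ 2 := by
      simp only [Lmap, sum_inner, real_inner_smul_left]
      rw [Finset.mul_sum, ← Finset.sum_sub_distrib]
      refine Finset.sum_congr rfl fun st _ => ?_
      rw [Finset.mul_sum]
      have hrow : ∑ st' : S, pidist st * P st st' * x st ^ 2
          = pidist st * x st ^ 2 := by
        have : ∀ st' : S, pidist st * P st st' * x st ^ 2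
            = pidist st * x st ^ 2 * P st st' := fun st' => by ring
        simp only [this, ← Finset.mul_sum, hP1, mul_one]
      rw [← hrow, ← Finset.sum_sub_distrib]
      refine Finset.sum_congr rfl fun st' _ => ?_
      simp only [hx]
      ring
    have hcross := cross_bound P hP0 hP1 pidist (fun st => (hpi0 st).le) hstat x
    have hωu := hωmin u
    rw [hcalc]
    nlinarith [hcross, hωu, hγ0.le, sub_pos.mpr hγ1]
  -- norm bound for Lmap
  have hnorm : ∀ u : EuclideanSpace ℝ (Fin m),
      ‖Lmap γ φ P pidist u‖ ≤ 2 * ‖u‖ := by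
    intro u
    have h1 : ‖Lmap γ φ P pidist u‖
        ≤ ∑ st : S, ∑ st' : S,
            ‖(pidist st * P st st' * (γ * ⟪φ st', u⟫ - ⟪φ st, u⟫)) • φ st‖ := by
      refine (norm_sum_le _ _).trans ?_
      exact Finset.sum_le_sum fun st _ => norm_sum_le _ _
    have h2 : ∀ st st' : S,
        ‖(pidist st * P st st' * (γ * ⟪φ st', u⟫ - ⟪φ st, u⟫)) • φ st‖
          ≤ pidist st * P st st' * (2 * ‖u‖) := by
      intro st st'
      rw [norm_smul, Real.norm_eq_abs]
      have hw : 0 ≤ pidist st * P st st' := mul_nonneg (hpi0 st).le (hP0 st st')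
      have habs : |γ * ⟪φ st', u⟫ - ⟪φ st, u⟫| ≤ 2 * ‖u‖ := by
        have h1' : |⟪φ st', u⟫| ≤ ‖u‖ := by
          refine (abs_real_inner_le_norm _ _).trans ?_
          nlinarith [hφ st', norm_nonneg u]
        have h2' : |⟪φ st, u⟫| ≤ ‖u‖ := by
          refine (abs_real_inner_le_norm _ _).trans ?_
          nlinarith [hφ st, norm_nonneg u]
        calc |γ * ⟪φ st', u⟫ - ⟪φ st, u⟫|
            ≤ |γ * ⟪φ st', u⟫| + |⟪φ st, u⟫| := abs_sub _ _
          _ = γ * |⟪φ st', u⟫| + |⟪φ st, u⟫| := by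
              rw [abs_mul, abs_of_pos hγ0]
          _ ≤ ‖u‖ + ‖u‖ := by
              have := abs_nonneg ⟪φ st', u⟫
              nlinarith
          _ = 2 * ‖u‖ := by ring
      rw [abs_mul, abs_of_nonneg hw]
      have hφn : ‖φ st‖ ≤ 1 := hφ st
      have habs0 := abs_nonneg (γ * ⟪φ st', u⟫ - ⟪φ st, u⟫)
      calc pidist st * P st st' * |γ * ⟪φ st', u⟫ - ⟪φ st, u⟫| * ‖φ st‖
          ≤ pidist st * P st st' * |γ * ⟪φ st', u⟫ - ⟪φ st, u⟫| * 1 :=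
            mul_le_mul_of_nonneg_left hφn (mul_nonneg hw habs0)
        _ = pidist st * P st st' * |γ * ⟪φ st', u⟫ - ⟪φ st, u⟫| := mul_one _
        _ ≤ pidist st * P st st' * (2 * ‖u‖) :=
            mul_le_mul_of_nonneg_left habs hw
    have h3 : ∑ st : S, ∑ st' : S, pidist st * P st st' * (2 * ‖u‖) = 2 * ‖u‖ := by
      have : ∀ st : S, ∑ st' : S, pidist st * P st st' * (2 * ‖u‖)
          = pidist st * (2 * ‖u‖) := by
        intro st
        have e : ∀ st' : S, pidist st * P st st' * (2 * ‖u‖)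
            = pidist st * (2 * ‖u‖) * P st st' := fun st' => by ring
        simp only [e, ← Finset.mul_sum, hP1, mul_one]
      simp only [this, ← Finset.sum_mul, hpi1, one_mul]
    calc ‖Lmap γ φ P pidist u‖
        ≤ ∑ st : S, ∑ st' : S,
            ‖(pidist st * P st st' * (γ * ⟪φ st', u⟫ - ⟪φ st, u⟫)) • φ st‖ := h1
      _ ≤ ∑ st : S, ∑ st' : S, pidist st * P st st' * (2 * ‖u‖) :=
          Finset.sum_le_sum fun st _ => Finset.sum_le_sum fun st' _ => h2 st st'
      _ = 2 * ‖u‖ := h3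
  -- one step contraction
  have step : ∀ k : ℕ, ‖θseq (k + 1) - θstar‖ ^ 2
      ≤ (1 - α * ω * (1 - γ)) * ‖θseq k - θstar‖ ^ 2 := by
    intro k
    set u := θseq k - θstar with hu
    have htd : tdBar γ φ P pidist R (θseq k) = Lmap γ φ P pidist u := by
      rw [tdBar_eq_add_Lmap γ φ P pidist R (θseq k) θstar, hθstar, zero_add]
    have heq : θseq (k + 1) - θstar = u + α • Lmap γ φ P pidist u := by
      rw [hrec k, htd, hu]; abel
    rw [heq]
    set L := Lmap γ φ P pidist u with hL
    have hexp : ‖u + α • L‖ ^ 2 = ‖u‖ ^ 2 + 2 * ⟪u, α • L⟫ + ‖α • L‖ ^ 2 :=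
      norm_add_sq_real u (α • L)
    have hi : ⟪u, α • L⟫ = α * ⟪L, u⟫ := by
      rw [real_inner_smul_right, real_inner_comm]
    have hsq : ‖α • L‖ ^ 2 ≤ 4 * α ^ 2 * ‖u‖ ^ 2 := by
      have h1 : ‖α • L‖ = α * ‖L‖ := by
        rw [norm_smul, Real.norm_eq_abs, abs_of_pos hαpos]
      have h2 : ‖L‖ ≤ 2 * ‖u‖ := hnorm u
      rw [h1]
      nlinarith [mul_le_mul h2 h2 (norm_nonneg L)
        (by positivity : (0:ℝ) ≤ 2 * ‖u‖), sq_nonneg α, hαpos.le]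
    have hIL := hinner u
    have hterm1 : α * ⟪L, u⟫ ≤ α * (-((1 - γ) * (ω * ‖u‖ ^ 2))) :=
      mul_le_mul_of_nonneg_left hIL hαpos.le
    have hterm2 : 0 ≤ (ω * (1 - γ) - 4 * α) * (α * ‖u‖ ^ 2) :=
      mul_nonneg (by linarith) (mul_nonneg hαpos.le (sq_nonneg _))
    rw [hexp, hi]
    nlinarith [hterm1, hterm2, hsq]
  refine ⟨step, ?_⟩
  have hwg : 0 < ω * (1 - γ) := mul_pos hω0 (by linarith)
  have hwg1 : ω * (1 - γ) ≤ 1 := by nlinarith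
  have hfac : 0 ≤ 1 - α * ω * (1 - γ) := by
    nlinarith [mul_le_mul_of_nonneg_right hα hwg.le, hwg, hwg1]
  intro k
  induction k with
  | zero => simp
  | succ n ih =>
      calc ‖θseq (n + 1) - θstar‖ ^ 2
          ≤ (1 - α * ω * (1 - γ)) * ‖θseq n - θstar‖ ^ 2 := step n
        _ ≤ (1 - α * ω * (1 - γ)) * ((1 - α * ω * (1 - γ)) ^ n * ‖θseq 0 - θstar‖ ^ 2) :=
            mul_le_mul_of_nonneg_left ih hfac
        _ = (1 - α * ω * (1 - γ)) ^ (n + 1) * ‖θseq 0 - θstar‖ ^ 2 := by ring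
end
end

section
/- (Burn-in bound) If ατ ≤ 1/(1032ζ'), then the QFedTD iterate at time 2τ satisfies E[δ_{2τ}²] ≤ 2δ_0² + pσ². -/
open MeasureTheory ProbabilityTheory Finset
open scoped RealInnerProductSpace ProbabilityTheory

noncomputable section

lemma aux_pow (ε : ℝ) (hε : 0 ≤ ε) : ∀ n : ℕ, (n : ℝ) * ε ≤ 1/2 → (1+ε)^n ≤ 1 + 2*n*ε := by
  intro n
  induction n with
  | zero => simp
  | succ n ih =>
    intro hn
    have hn' : (n : ℝ) * ε ≤ 1/2 := le_trans (by push_cast; nlinarith) hn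
    have h1 := ih hn'
    have h2 : (0:ℝ) ≤ (1+ε)^n := by positivity
    have h3 : ((n:ℝ) * ε) * ε ≤ (1/2) * ε := mul_le_mul_of_nonneg_right hn' hε
    have h4 : (1+ε)^(n+1) ≤ (1 + 2*(n:ℝ)*ε) * (1+ε) := by
      rw [pow_succ]
      apply mul_le_mul_of_nonneg_right h1 (by linarith)
    push_cast
    nlinarith

lemma aux_sq (x y α : ℝ) (hα : 0 < α) (hα1 : α ≤ 1) :
    (x + α*y)^2 ≤ (1+α)*x^2 + 2*α*y^2 := by
  nlinarith [mul_nonneg hα.le (sq_nonneg (x - y)),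
    mul_nonneg (mul_nonneg hα.le (sub_nonneg.2 hα1)) (sq_nonneg y)]

lemma aux_norm_sum_sq {E : Type*} [NormedAddCommGroup E] {n : ℕ} (f : Fin n → E) :
    ‖∑ i, f i‖^2 ≤ (n:ℝ) * ∑ i, ‖f i‖^2 := by
  calc ‖∑ i, f i‖^2 ≤ (∑ i, ‖f i‖)^2 := by
        apply pow_le_pow_left₀ (norm_nonneg _) (norm_sum_le _ _)
    _ ≤ ((Finset.univ (α := Fin n)).card : ℝ) * ∑ i, ‖f i‖^2 := sq_sum_le_card_mul_sum_sq
    _ = (n:ℝ) * ∑ i, ‖f i‖^2 := by simp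

lemma aux_two_sq {E : Type*} [NormedAddCommGroup E] (a b : E) :
    ‖a - b‖^2 ≤ 2*‖a‖^2 + 2*‖b‖^2 := by
  have h := norm_sub_le a b
  nlinarith [sq_nonneg (‖a‖ - ‖b‖), norm_nonneg a, norm_nonneg b, norm_nonneg (a-b)]

lemma aux_two_sq' {E : Type*} [NormedAddCommGroup E] (a b : E) :
    ‖a‖^2 ≤ 2*‖a - b‖^2 + 2*‖b‖^2 := by
  have h : ‖a‖ ≤ ‖b‖ + ‖a - b‖ := norm_le_norm_add_norm_sub' a b
  nlinarith [sq_nonneg (‖a - b‖ - ‖b‖), norm_nonneg a, norm_nonneg b, norm_nonneg (a-b)]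

set_option maxHeartbeats 4000000

/-- **Burn-in bound.** -/
theorem stmt10
    (S : Type*) [Fintype S] [Nonempty S] [MeasurableSpace S] (m N : ℕ) (hN : 0 < N)
    (Ω : Type*) [MeasureSpace Ω] [IsProbabilityMeasure (ℙ : Measure Ω)]
    (γ : ℝ) (hγ : γ ∈ Set.Ioo (0 : ℝ) 1)
    (φ : S → EuclideanSpace ℝ (Fin m)) (hφ : ∀ st : S, ‖φ st‖ ≤ 1)
    (hrank : Function.Injective fun θ' : EuclideanSpace ℝ (Fin m) => fun st : S => ⟪φ st, θ'⟫)
    (P : S → S → ℝ) (hP0 : ∀ st st' : S, 0 ≤ P st st')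
    (hP1 : ∀ st : S, ∑ st' : S, P st st' = 1)
    (pidist : S → ℝ) (hpi0 : ∀ st : S, 0 < pidist st) (hpi1 : ∑ st : S, pidist st = 1)
    (hstat : ∀ st' : S, ∑ st : S, pidist st * P st st' = pidist st')
    (R : S → ℝ) (rbar : ℝ) (hrbar : 0 < rbar) (hR : ∀ st : S, |R st| ≤ rbar)
    (ω : ℝ) (hω : ω ∈ Set.Ioo (0 : ℝ) 1)
    (hωmin : ∀ θ' : EuclideanSpace ℝ (Fin m), ω * ‖θ'‖ ^ 2 ≤ ∑ st : S, pidist st * ⟪φ st, θ'⟫ ^ 2)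
    (θstar : EuclideanSpace ℝ (Fin m)) (hθstar : tdBar γ φ P pidist R θstar = 0)
    (σ : ℝ) (hσ : σ = max 1 (max rbar ‖θstar‖))
    (p : ℝ) (hp : p ∈ Set.Ioc (0 : ℝ) 1)
    (ζ : ℝ) (hζ : 0 ≤ ζ) (ζ' : ℝ) (hζ' : ζ' = max 1 ζ)
    (α : ℝ) (hα : α ∈ Set.Ioo (0 : ℝ) 1)
    (q : ℕ) (hq : 2 ≤ q) (τ : ℕ) (hτ : 1 ≤ τ)
    (s : Fin N → ℕ → Ω → S) (hs_meas : ∀ i k, Measurable (s i k))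
    (b : Fin N → ℕ → Ω → ℝ) (hb_meas : ∀ i k, Measurable (b i k))
    (h : Fin N → ℕ → Ω → EuclideanSpace ℝ (Fin m)) (hh_meas : ∀ i k, Measurable (h i k))
    (hh_int : ∀ i k, Integrable (fun x => ‖h i k x‖ ^ 2))
    (o : Fin N → ℕ → Ω → S × ℝ × S)
    (ho : ∀ i k x, o i k x = (s i k x, R (s i k x), s i (k + 1) x))
    (g : Fin N → ℕ → EuclideanSpace ℝ (Fin m) → Ω → EuclideanSpace ℝ (Fin m))
    (hg : ∀ i k θ' x, g i k θ' x = tdDir γ φ θ' (o i k x))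
    (v : ℕ → Ω → EuclideanSpace ℝ (Fin m))
    (hv : ∀ k x, v k x = (N : ℝ)⁻¹ • ∑ i : Fin N, b i k x • h i k x)
    (θ : ℕ → Ω → EuclideanSpace ℝ (Fin m)) (θ0 : EuclideanSpace ℝ (Fin m))
    (hθ0 : ∀ x, θ 0 x = θ0)
    (hθrec : ∀ k x, θ (k + 1) x = θ k x + α • v k x)
    (hmarkov : ∀ (i : Fin N) (k : ℕ) (f : S → ℝ),
      (𝔼[(fun x => f (s i (k + 1) x)) |
          ⨆ (j : ℕ) (_ : j ≤ k), MeasurableSpace.comap (s i j) inferInstance])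
        =ᵐ[ℙ] fun x => ∑ st' : S, P (s i k x) st' * f st')
    (hchains_indep : ProbabilityTheory.iIndep
      (fun i : Fin N => ⨆ k : ℕ, MeasurableSpace.comap (s i k) inferInstance) ℙ)
    (hb01 : ∀ i k x, b i k x = 0 ∨ b i k x = 1)
    (hbp : ∀ i k, (ℙ : Measure Ω) {x | b i k x = 1} = ENNReal.ofReal p)
    (hb_indep : ∀ (i : Fin N) (k : ℕ), ProbabilityTheory.Indep
      (MeasurableSpace.comap (b i k) inferInstance)
      ((⨆ (j : Fin N) (l : ℕ), MeasurableSpace.comap (s j l) inferInstance) ⊔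
        (⨆ (jl : Fin N × ℕ) (_ : jl ≠ (i, k)),
          MeasurableSpace.comap (b jl.1 jl.2) inferInstance) ⊔
        (⨆ (j : Fin N) (l : ℕ) (_ : l ≤ k), MeasurableSpace.comap (h j l) inferInstance)) ℙ)
    (hQmean : ∀ (i : Fin N) (k : ℕ),
      (𝔼[h i k |
          (⨆ (j : Fin N) (l : ℕ), MeasurableSpace.comap (s j l) inferInstance) ⊔
          (⨆ (j : Fin N) (l : ℕ), MeasurableSpace.comap (b j l) inferInstance) ⊔
          (⨆ (j : Fin N) (l : ℕ) (_ : l < k), MeasurableSpace.comap (h j l) inferInstance) ⊔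
          (⨆ (j : Fin N) (_ : j ≠ i), MeasurableSpace.comap (h j k) inferInstance)])
        =ᵐ[ℙ] fun x => g i k (θ k x) x)
    (hQvar : ∀ (i : Fin N) (k : ℕ),
      ∀ᵐ x ∂(ℙ : Measure Ω),
        (𝔼[(fun y => ‖h i k y - g i k (θ k y) y‖ ^ 2) |
            (⨆ (j : Fin N) (l : ℕ), MeasurableSpace.comap (s j l) inferInstance) ⊔
            (⨆ (j : Fin N) (l : ℕ), MeasurableSpace.comap (b j l) inferInstance) ⊔
            (⨆ (j : Fin N) (l : ℕ) (_ : l < k), MeasurableSpace.comap (h j l) inferInstance) ⊔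
            (⨆ (j : Fin N) (_ : j ≠ i), MeasurableSpace.comap (h j k) inferInstance)]) x
          ≤ ζ * ‖g i k (θ k x) x‖ ^ 2)
    (hmix : ∀ (θ' : EuclideanSpace ℝ (Fin m)) (i : Fin N) (k : ℕ), τ ≤ k →
      ∀ᵐ x ∂(ℙ : Measure Ω),
        ‖(𝔼[g i k θ' | MeasurableSpace.comap (o i (k - τ)) inferInstance]) x
          - tdBar γ φ P pidist R θ'‖ ≤ α ^ q * (‖θ'‖ + 1))
    (hα10 : α * (τ : ℝ) ≤ 1 / (1032 * ζ')) :
    𝔼[fun x => ‖θ (2 * τ) x - θstar‖ ^ 2] ≤ 2 * ‖θ0 - θstar‖ ^ 2 + p * σ ^ 2 := by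
    -- basic scalar facts
  obtain ⟨hγ0, hγ1⟩ := hγ
  obtain ⟨hα0, hα1⟩ := hα
  obtain ⟨hp0, hp1⟩ := hp
  have hσ1 : (1:ℝ) ≤ σ := by rw [hσ]; exact le_max_left _ _
  have hσr : rbar ≤ σ := by rw [hσ]; exact le_trans (le_max_left _ _) (le_max_right _ _)
  have hσθ : ‖θstar‖ ≤ σ := by rw [hσ]; exact le_trans (le_max_right _ _) (le_max_right _ _)
  have hζ'1 : (1:ℝ) ≤ ζ' := by rw [hζ']; exact le_max_left _ _
  have hζζ' : ζ ≤ ζ' := by rw [hζ']; exact le_max_right _ _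
  have hζ'0 : (0:ℝ) < ζ' := lt_of_lt_of_le one_pos hζ'1
  have hN0 : (0:ℝ) < N := by exact_mod_cast hN
  have hζ'ατ : ζ' * (α * τ) ≤ 1/1032 := by
    have h1 := mul_le_mul_of_nonneg_left hα10 hζ'0.le
    have h2 : ζ' * (1 / (1032 * ζ')) = 1/1032 := by field_simp
    linarith [h1, h2.le, h2.ge]
  have hτ0 : (0:ℝ) < τ := by exact_mod_cast hτ
  -- measurability of v and θ
  have hvmeas : ∀ k, Measurable (v k) := by
    intro k
    have hvk : v k = fun x => (N:ℝ)⁻¹ • ∑ i : Fin N, b i k x • h i k x := funext (hv k)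
    rw [hvk]
    exact (Finset.measurable_sum Finset.univ fun i _ => ((hb_meas i k).smul (hh_meas i k))).const_smul ((N:ℝ)⁻¹)
  have hθmeas : ∀ k, Measurable (θ k) := by
    intro k
    induction k with
    | zero =>
      have : θ 0 = fun _ => θ0 := funext hθ0
      rw [this]; exact measurable_const
    | succ k ih =>
      have : θ (k+1) = fun x => θ k x + α • v k x := funext (hθrec k)
      rw [this]; exact ih.add ((hvmeas k).const_smul α)
  -- pointwise bounds on v
  have hvpt : ∀ k x, ‖v k x‖^2 ≤ (N:ℝ)⁻¹ * ∑ i, b i k x * ‖h i k x‖^2 := by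
    intro k x
    calc ‖v k x‖^2 = ((N:ℝ)⁻¹)^2 * ‖∑ i, b i k x • h i k x‖^2 := by
          rw [hv k x, norm_smul, mul_pow, Real.norm_eq_abs, abs_of_nonneg (by positivity)]
      _ ≤ ((N:ℝ)⁻¹)^2 * ((N:ℝ) * ∑ i, ‖b i k x • h i k x‖^2) :=
          mul_le_mul_of_nonneg_left (aux_norm_sum_sq _) (by positivity)
      _ = (N:ℝ)⁻¹ * ∑ i, ‖b i k x • h i k x‖^2 := by
          field_simp
      _ = (N:ℝ)⁻¹ * ∑ i, b i k x * ‖h i k x‖^2 := by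
          congr 1
          refine Finset.sum_congr rfl fun i _ => ?_
          rw [norm_smul, mul_pow, Real.norm_eq_abs]
          rcases hb01 i k x with hb | hb <;> simp [hb]
  have hvpt' : ∀ k x, ‖v k x‖^2 ≤ ∑ i, ‖h i k x‖^2 := by
    intro k x
    refine le_trans (hvpt k x) ?_
    have h1 : ∑ i, b i k x * ‖h i k x‖^2 ≤ ∑ i, ‖h i k x‖^2 :=
      Finset.sum_le_sum fun i _ => by
        rcases hb01 i k x with hb | hb <;> simp [hb] <;> positivity
    have h2 : (N:ℝ)⁻¹ ≤ 1 := by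
      rw [inv_le_one_iff₀]; right; exact_mod_cast hN
    have h3 : (0:ℝ) ≤ ∑ i, b i k x * ‖h i k x‖^2 :=
      Finset.sum_nonneg fun i _ => by
        rcases hb01 i k x with hb | hb <;> simp [hb] <;> positivity
    calc (N:ℝ)⁻¹ * ∑ i, b i k x * ‖h i k x‖^2 ≤ 1 * ∑ i, b i k x * ‖h i k x‖^2 :=
          mul_le_mul_of_nonneg_right h2 h3
      _ = ∑ i, b i k x * ‖h i k x‖^2 := one_mul _
      _ ≤ _ := h1
  -- integrability
  have hvsq_int : ∀ k, Integrable (fun x => ‖v k x‖^2) := by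
    intro k
    refine Integrable.mono' (g := fun x => ∑ i : Fin N, ‖h i k x‖^2)
      (integrable_finset_sum (f := fun (i : Fin N) x => ‖h i k x‖^2) Finset.univ
        fun i _ => hh_int i k)
      (((hvmeas k).norm.pow_const 2).aestronglyMeasurable) ?_
    filter_upwards with x
    rw [Real.norm_eq_abs, abs_of_nonneg (by positivity)]
    exact hvpt' k x
  have hδ_int : ∀ k, Integrable (fun x => ‖θ k x - θstar‖^2) := by
    intro k
    induction k with
    | zero => simp only [hθ0]; exact integrable_const _
    | succ k ih =>
      refine Integrable.mono' ((ih.const_mul 2).add ((hvsq_int k).const_mul 2))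
        ((((hθmeas (k+1)).sub measurable_const).norm.pow_const 2).aestronglyMeasurable) ?_
      filter_upwards with x
      simp only [Pi.add_apply]
      rw [Real.norm_eq_abs, abs_of_nonneg (by positivity), hθrec k x]
      have heq : θ k x + α • v k x - θstar = (θ k x - θstar) + α • v k x := by abel
      rw [heq]
      have h1 : ‖(θ k x - θstar) + α • v k x‖ ≤ ‖θ k x - θstar‖ + ‖v k x‖ := by
        refine (norm_add_le _ _).trans ?_
        rw [norm_smul, Real.norm_eq_abs, abs_of_pos hα0]
        nlinarith [norm_nonneg (v k x)]
      nlinarith [sq_nonneg (‖θ k x - θstar‖ - ‖v k x‖), norm_nonneg (v k x),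
        norm_nonneg (θ k x - θstar), norm_nonneg ((θ k x - θstar) + α • v k x)]
  -- the σ-algebra in hQmean/hQvar is below the ambient one
  have hFle : ∀ (i : Fin N) (k : ℕ),
      ((⨆ (j : Fin N) (l : ℕ), MeasurableSpace.comap (s j l) inferInstance) ⊔
       (⨆ (j : Fin N) (l : ℕ), MeasurableSpace.comap (b j l) inferInstance) ⊔
       (⨆ (j : Fin N) (l : ℕ) (_ : l < k), MeasurableSpace.comap (h j l) inferInstance) ⊔
       (⨆ (j : Fin N) (_ : j ≠ i), MeasurableSpace.comap (h j k) inferInstance)) ≤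
      (inferInstance : MeasurableSpace Ω) := by
    intro i k
    refine sup_le (sup_le (sup_le ?_ ?_) ?_) ?_
    · exact iSup_le fun j => iSup_le fun l => (hs_meas j l).comap_le
    · exact iSup_le fun j => iSup_le fun l => (hb_meas j l).comap_le
    · exact iSup_le fun j => iSup_le fun l => iSup_le fun _ => (hh_meas j l).comap_le
    · exact iSup_le fun j => iSup_le fun _ => (hh_meas j k).comap_le
  -- a.e. strong measurability of the TD directions evaluated along the iterates
  have hgAESM : ∀ (i : Fin N) (k : ℕ),
      AEStronglyMeasurable (fun x => g i k (θ k x) x) ℙ := by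
    intro i k
    exact ((stronglyMeasurable_condExp.mono (hFle i k)).aestronglyMeasurable).congr (hQmean i k)
  -- pointwise bound on the TD direction
  have hg_pt : ∀ (i : Fin N) (k : ℕ) (θ' : EuclideanSpace ℝ (Fin m)) x,
      ‖g i k θ' x‖ ≤ rbar + 2*‖θ'‖ := by
    intro i k θ' x
    rw [hg i k θ' x, ho i k x]
    simp only [tdDir]
    rw [norm_smul, Real.norm_eq_abs]
    have h3 : ‖φ (s i (k+1) x)‖ * ‖θ'‖ ≤ ‖θ'‖ :=
      mul_le_of_le_one_left (norm_nonneg _) (hφ _)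
    have h4 : ‖φ (s i k x)‖ * ‖θ'‖ ≤ ‖θ'‖ :=
      mul_le_of_le_one_left (norm_nonneg _) (hφ _)
    obtain ⟨hi1, hi2⟩ := abs_le.mp (le_trans (abs_real_inner_le_norm (φ (s i (k+1) x)) θ') h3)
    obtain ⟨hj1, hj2⟩ := abs_le.mp (le_trans (abs_real_inner_le_norm (φ (s i k x)) θ') h4)
    obtain ⟨hr1, hr2⟩ := abs_le.mp (hR (s i k x))
    have hmm : (0:ℝ) ≤ (1-γ) * ‖θ'‖ := mul_nonneg (by linarith) (norm_nonneg θ')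
    have hgi2 : γ * ⟪φ (s i (k+1) x), θ'⟫ ≤ ‖θ'‖ := by
      have h9 := mul_le_mul_of_nonneg_left hi2 hγ0.le
      linarith
    have hgi1 : -‖θ'‖ ≤ γ * ⟪φ (s i (k+1) x), θ'⟫ := by
      have h9 := mul_le_mul_of_nonneg_left hi1 hγ0.le
      linarith
    have habs : |R (s i k x) + γ * ⟪φ (s i (k+1) x), θ'⟫ - ⟪φ (s i k x), θ'⟫|
        ≤ rbar + 2*‖θ'‖ := by
      rw [abs_le]
      constructor <;> linarith
    calc |R (s i k x) + γ * ⟪φ (s i (k+1) x), θ'⟫ - ⟪φ (s i k x), θ'⟫| * ‖φ (s i k x)‖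
        ≤ |R (s i k x) + γ * ⟪φ (s i (k+1) x), θ'⟫ - ⟪φ (s i k x), θ'⟫| * 1 :=
          mul_le_mul_of_nonneg_left (hφ _) (abs_nonneg _)
      _ = _ := mul_one _
      _ ≤ rbar + 2*‖θ'‖ := habs
  have hg_sq : ∀ (i : Fin N) (k : ℕ) x,
      ‖g i k (θ k x) x‖^2 ≤ 8*‖θ k x - θstar‖^2 + 18*σ^2 := by
    intro i k x
    have h1 := hg_pt i k (θ k x) x
    have h2 : ‖θ k x‖ ≤ ‖θ k x - θstar‖ + ‖θstar‖ := by
      have : θ k x = (θ k x - θstar) + θstar := by abel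
      rw [this]; exact (norm_add_le _ _).trans (by rw [← this])
    have h3 : ‖g i k (θ k x) x‖ ≤ 3*σ + 2*‖θ k x - θstar‖ := by
      calc ‖g i k (θ k x) x‖ ≤ rbar + 2*‖θ k x‖ := h1
        _ ≤ σ + 2*(‖θ k x - θstar‖ + σ) := by nlinarith
        _ = 3*σ + 2*‖θ k x - θstar‖ := by ring
    have h4 : ‖g i k (θ k x) x‖^2 ≤ (3*σ + 2*‖θ k x - θstar‖)^2 :=
      pow_le_pow_left₀ (norm_nonneg _) h3 2
    nlinarith [sq_nonneg (3*σ - 2*‖θ k x - θstar‖)]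
  have hg_int : ∀ (i : Fin N) (k : ℕ), Integrable (fun x => ‖g i k (θ k x) x‖^2) := by
    intro i k
    refine Integrable.mono' (((hδ_int k).const_mul 8).add (integrable_const (18*σ^2)))
      (((hgAESM i k).norm.pow 2)) ?_
    filter_upwards with x
    simp only [Pi.add_apply]
    rw [Real.norm_eq_abs, abs_of_nonneg (by positivity)]
    exact hg_sq i k x
  have hhg_int : ∀ (i : Fin N) (k : ℕ),
      Integrable (fun x => ‖h i k x - g i k (θ k x) x‖^2) := by
    intro i k
    refine Integrable.mono' (((hh_int i k).const_mul 2).add ((hg_int i k).const_mul 2))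
      ((((hh_meas i k).aestronglyMeasurable.sub (hgAESM i k)).norm.pow 2)) ?_
    filter_upwards with x
    simp only [Pi.add_apply]
    rw [Real.norm_eq_abs, abs_of_nonneg (by positivity)]
    exact aux_two_sq _ _
  -- second moment of h bounded via the quantization variance bound
  have hHle : ∀ (i : Fin N) (k : ℕ),
      ∫ x, ‖h i k x‖^2 ≤ 4*ζ' * ∫ x, ‖g i k (θ k x) x‖^2 := by
    intro i k
    have hgnn : 0 ≤ ∫ x, ‖g i k (θ k x) x‖^2 := integral_nonneg fun x => by positivity
    have hvar : ∫ x, ‖h i k x - g i k (θ k x) x‖^2 ≤ ζ * ∫ x, ‖g i k (θ k x) x‖^2 := by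
      rw [← integral_condExp (hFle i k)
        (f := fun y => ‖h i k y - g i k (θ k y) y‖^2) (μ := ℙ)]
      calc _ ≤ ∫ x, ζ * ‖g i k (θ k x) x‖^2 :=
            integral_mono_ae integrable_condExp ((hg_int i k).const_mul ζ) (hQvar i k)
        _ = ζ * ∫ x, ‖g i k (θ k x) x‖^2 := integral_const_mul ζ _
    have hsplit : ∫ x, ‖h i k x‖^2 ≤
        2 * (∫ x, ‖h i k x - g i k (θ k x) x‖^2) + 2 * ∫ x, ‖g i k (θ k x) x‖^2 := by
      have hpt : ∀ x, ‖h i k x‖^2 ≤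
          2*‖h i k x - g i k (θ k x) x‖^2 + 2*‖g i k (θ k x) x‖^2 :=
        fun x => aux_two_sq' _ _
      calc ∫ x, ‖h i k x‖^2
          ≤ ∫ x, (2*‖h i k x - g i k (θ k x) x‖^2 + 2*‖g i k (θ k x) x‖^2) :=
            integral_mono (hh_int i k)
              (((hhg_int i k).const_mul 2).add ((hg_int i k).const_mul 2)) hpt
        _ = 2 * (∫ x, ‖h i k x - g i k (θ k x) x‖^2) + 2 * ∫ x, ‖g i k (θ k x) x‖^2 := by
            rw [integral_add ((hhg_int i k).const_mul 2) ((hg_int i k).const_mul 2),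
              integral_const_mul, integral_const_mul]
    nlinarith
  -- E[b ‖h‖²] = p E[‖h‖²]
  have hb_int : ∀ (i : Fin N) (k : ℕ), Integrable (b i k) := by
    intro i k
    refine Integrable.mono' (integrable_const 1) (hb_meas i k).aestronglyMeasurable ?_
    filter_upwards with x
    rcases hb01 i k x with hb | hb <;> simp [hb]
  have hbh_int : ∀ (i : Fin N) (k : ℕ), Integrable (fun x => b i k x * ‖h i k x‖^2) := by
    intro i k
    refine Integrable.mono' (hh_int i k)
      ((hb_meas i k).mul ((hh_meas i k).norm.pow_const 2)).aestronglyMeasurable ?_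
    filter_upwards with x
    rcases hb01 i k x with hb | hb <;>
      rw [Real.norm_eq_abs, hb] <;> simp <;> positivity
  have hbE : ∀ (i : Fin N) (k : ℕ), ∫ x, b i k x = p := by
    intro i k
    have hset : MeasurableSet {x | b i k x = 1} := (hb_meas i k) (measurableSet_singleton 1)
    have heq : (fun x => b i k x) = Set.indicator {x | b i k x = 1} 1 := by
      funext x
      rcases hb01 i k x with hb | hb
      · rw [hb, Set.indicator_apply]
        simp [Set.mem_setOf_eq, hb]
      · rw [hb, Set.indicator_apply]
        simp [Set.mem_setOf_eq, hb]
    rw [heq, integral_indicator_one hset, measureReal_def, hbp i k, ENNReal.toReal_ofReal hp0.le]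
  have hbh : ∀ (i : Fin N) (k : ℕ),
      ∫ x, b i k x * ‖h i k x‖^2 = p * ∫ x, ‖h i k x‖^2 := by
    intro i k
    have hIf : IndepFun (b i k) (fun x => ‖h i k x‖^2) ℙ := by
      rw [IndepFun_iff_Indep]
      refine indep_of_indep_of_le_right (hb_indep i k) ?_
      have h1 : MeasurableSpace.comap (fun x => ‖h i k x‖^2) inferInstance ≤
          MeasurableSpace.comap (h i k) inferInstance := by
        have he : (fun x => ‖h i k x‖^2)
            = (fun y : EuclideanSpace ℝ (Fin m) => ‖y‖^2) ∘ (h i k) := rfl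
        rw [he, ← MeasurableSpace.comap_comp]
        exact MeasurableSpace.comap_mono (measurable_norm.pow_const 2).comap_le
      refine h1.trans (le_trans ?_ le_sup_right)
      exact le_iSup_of_le i (le_iSup_of_le k (le_iSup_of_le le_rfl le_rfl))
    have h0 := IndepFun.integral_fun_mul_eq_mul_integral hIf (hb_int i k).aestronglyMeasurable (hh_int i k).aestronglyMeasurable
    have h2 : ∫ x, b i k x * ‖h i k x‖^2 = (∫ x, b i k x) * ∫ x, ‖h i k x‖^2 := h0
    rw [h2, hbE i k]
  -- the key variance bound on v
  have Xdef : ∀ k, (0:ℝ) ≤ ∫ x, ‖θ k x - θstar‖^2 := fun k =>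
    integral_nonneg fun x => by positivity
  have hGle : ∀ (i : Fin N) (k : ℕ),
      ∫ x, ‖g i k (θ k x) x‖^2 ≤ 8 * (∫ x, ‖θ k x - θstar‖^2) + 18*σ^2 := by
    intro i k
    calc ∫ x, ‖g i k (θ k x) x‖^2
        ≤ ∫ x, (8*‖θ k x - θstar‖^2 + 18*σ^2) :=
          integral_mono (hg_int i k)
            (((hδ_int k).const_mul 8).add (integrable_const _)) (hg_sq i k)
      _ = 8 * (∫ x, ‖θ k x - θstar‖^2) + 18*σ^2 := by
          rw [integral_add ((hδ_int k).const_mul 8) (integrable_const _),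
            integral_const_mul, integral_const]
          simp [measure_univ]
  have hVle : ∀ k, ∫ x, ‖v k x‖^2 ≤
      4*p*ζ' * (8 * (∫ x, ‖θ k x - θstar‖^2) + 18*σ^2) := by
    intro k
    have hbd : (0:ℝ) ≤ 8 * (∫ x, ‖θ k x - θstar‖^2) + 18*σ^2 := by
      nlinarith [Xdef k, sq_nonneg σ]
    have hterm : ∀ i : Fin N, ∫ x, b i k x * ‖h i k x‖^2 ≤
        p * (4*ζ' * (8 * (∫ x, ‖θ k x - θstar‖^2) + 18*σ^2)) := by
      intro i
      rw [hbh i k]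
      refine mul_le_mul_of_nonneg_left ?_ hp0.le
      calc ∫ x, ‖h i k x‖^2 ≤ 4*ζ' * ∫ x, ‖g i k (θ k x) x‖^2 := hHle i k
        _ ≤ 4*ζ' * (8 * (∫ x, ‖θ k x - θstar‖^2) + 18*σ^2) :=
            mul_le_mul_of_nonneg_left (hGle i k) (by linarith)
    calc ∫ x, ‖v k x‖^2
        ≤ ∫ x, (N:ℝ)⁻¹ * ∑ i, b i k x * ‖h i k x‖^2 :=
          integral_mono (hvsq_int k)
            ((integrable_finset_sum _ fun i _ => hbh_int i k).const_mul _) (hvpt k)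
      _ = (N:ℝ)⁻¹ * ∑ i, ∫ x, b i k x * ‖h i k x‖^2 := by
          rw [integral_const_mul, integral_finset_sum _ fun i _ => hbh_int i k]
      _ ≤ (N:ℝ)⁻¹ * ∑ _i : Fin N,
            p * (4*ζ' * (8 * (∫ x, ‖θ k x - θstar‖^2) + 18*σ^2)) := by
          refine mul_le_mul_of_nonneg_left (Finset.sum_le_sum fun i _ => hterm i)
            (by positivity)
      _ = 4*p*ζ' * (8 * (∫ x, ‖θ k x - θstar‖^2) + 18*σ^2) := by
          rw [Finset.sum_const, Finset.card_univ, Fintype.card_fin, nsmul_eq_mul]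
          field_simp
  -- the one-step recursion
  have hrec : ∀ k, ∫ x, ‖θ (k+1) x - θstar‖^2 ≤
      (1 + 65*ζ'*α) * (∫ x, ‖θ k x - θstar‖^2) + 144*p*ζ'*α*σ^2 := by
    intro k
    have hpt : ∀ x, ‖θ (k+1) x - θstar‖^2 ≤
        (1+α)*‖θ k x - θstar‖^2 + 2*α*‖v k x‖^2 := by
      intro x
      rw [hθrec k x]
      have heq : θ k x + α • v k x - θstar = (θ k x - θstar) + α • v k x := by abel
      rw [heq]
      have h1 : ‖(θ k x - θstar) + α • v k x‖ ≤ ‖θ k x - θstar‖ + α*‖v k x‖ := by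
        refine (norm_add_le _ _).trans ?_
        rw [norm_smul, Real.norm_eq_abs, abs_of_pos hα0]
      have h2 : ‖(θ k x - θstar) + α • v k x‖^2 ≤ (‖θ k x - θstar‖ + α*‖v k x‖)^2 :=
        pow_le_pow_left₀ (norm_nonneg _) h1 2
      have h5 := aux_sq ‖θ k x - θstar‖ ‖v k x‖ α hα0 hα1.le
      linarith
    have h3 : ∫ x, ‖θ (k+1) x - θstar‖^2 ≤
        (1+α) * (∫ x, ‖θ k x - θstar‖^2) + 2*α*∫ x, ‖v k x‖^2 := by
      calc ∫ x, ‖θ (k+1) x - θstar‖^2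
          ≤ ∫ x, ((1+α)*‖θ k x - θstar‖^2 + 2*α*‖v k x‖^2) :=
            integral_mono (hδ_int (k+1))
              (((hδ_int k).const_mul _).add ((hvsq_int k).const_mul _)) hpt
        _ = (1+α) * (∫ x, ‖θ k x - θstar‖^2) + 2*α*∫ x, ‖v k x‖^2 := by
            rw [integral_add ((hδ_int k).const_mul _) ((hvsq_int k).const_mul _),
              integral_const_mul, integral_const_mul]
    have h4 := hVle k
    have h65 : 1 + 64*p*ζ' ≤ 65*ζ' := by nlinarith
    have h6 : 2*α*(∫ x, ‖v k x‖^2) ≤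
        2*α*(4*p*ζ' * (8 * (∫ x, ‖θ k x - θstar‖^2) + 18*σ^2)) := by
      refine mul_le_mul_of_nonneg_left h4 (by linarith)
    nlinarith [Xdef k, mul_nonneg (mul_nonneg (sub_nonneg.2 h65) hα0.le) (Xdef k)]
  -- iterate the recursion
  have hε0 : (0:ℝ) ≤ 65*ζ'*α := by positivity
  have hB0 : (0:ℝ) ≤ 144*p*ζ'*α*σ^2 := by positivity
  have hA1 : (1:ℝ) ≤ 1 + 65*ζ'*α := by linarith
  have hiter : ∀ n : ℕ, ∫ x, ‖θ n x - θstar‖^2 ≤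
      (1+65*ζ'*α)^n * (∫ x, ‖θ 0 x - θstar‖^2) + n * (1+65*ζ'*α)^n * (144*p*ζ'*α*σ^2) := by
    intro n
    induction n with
    | zero => simp
    | succ n ih =>
      have hp1' : (1:ℝ) ≤ (1+65*ζ'*α)^(n+1) := one_le_pow₀ hA1
      have hpnn : (0:ℝ) ≤ (1+65*ζ'*α)^n := by positivity
      calc ∫ x, ‖θ (n+1) x - θstar‖^2
          ≤ (1 + 65*ζ'*α) * (∫ x, ‖θ n x - θstar‖^2) + 144*p*ζ'*α*σ^2 := hrec n
        _ ≤ (1 + 65*ζ'*α) * ((1+65*ζ'*α)^n * (∫ x, ‖θ 0 x - θstar‖^2)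
              + n * (1+65*ζ'*α)^n * (144*p*ζ'*α*σ^2)) + 144*p*ζ'*α*σ^2 := by
            refine add_le_add (mul_le_mul_of_nonneg_left ih (by linarith)) le_rfl
        _ ≤ (1+65*ζ'*α)^(n+1) * (∫ x, ‖θ 0 x - θstar‖^2)
              + ((n:ℝ)+1) * (1+65*ζ'*α)^(n+1) * (144*p*ζ'*α*σ^2) := by
            have h8 : 144*p*ζ'*α*σ^2 ≤ (1+65*ζ'*α)^(n+1) * (144*p*ζ'*α*σ^2) :=
              le_mul_of_one_le_left hB0 hp1'
            have hEq : (1 + 65*ζ'*α) * ((1+65*ζ'*α)^n * (∫ x, ‖θ 0 x - θstar‖^2)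
                + n * (1+65*ζ'*α)^n * (144*p*ζ'*α*σ^2))
                + (1+65*ζ'*α)^(n+1) * (144*p*ζ'*α*σ^2)
                = (1+65*ζ'*α)^(n+1) * (∫ x, ‖θ 0 x - θstar‖^2)
                + ((n:ℝ)+1) * (1+65*ζ'*α)^(n+1) * (144*p*ζ'*α*σ^2) := by ring
            linarith
        _ = (1+65*ζ'*α)^(n+1) * (∫ x, ‖θ 0 x - θstar‖^2)
              + ((n+1:ℕ):ℝ) * (1+65*ζ'*α)^(n+1) * (144*p*ζ'*α*σ^2) := by
            push_cast
            ring
  -- numerics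
  have hsmall : ((2*τ : ℕ):ℝ) * (65*ζ'*α) ≤ 1/2 := by
    push_cast
    nlinarith
  have hPle : (1+65*ζ'*α)^(2*τ) ≤ 2 := by
    have := aux_pow (65*ζ'*α) hε0 (2*τ) hsmall
    push_cast at this ⊢
    nlinarith
  have hP1 : (1:ℝ) ≤ (1+65*ζ'*α)^(2*τ) := one_le_pow₀ hA1
  have hX0 : ∫ x, ‖θ 0 x - θstar‖^2 = ‖θ0 - θstar‖^2 := by
    simp only [hθ0]
    rw [integral_const]
    simp [measure_univ]
  have hfin := hiter (2*τ)
  rw [hX0] at hfin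
  have hτB : ((2*τ : ℕ):ℝ) * 2 * (144*p*ζ'*α*σ^2) ≤ p * σ^2 := by
    push_cast
    have h1 : 576*(p*σ^2)*(ζ'*(α*τ)) ≤ 576*(p*σ^2)*(1/1032) :=
      mul_le_mul_of_nonneg_left hζ'ατ (by positivity)
    nlinarith [mul_nonneg hp0.le (sq_nonneg σ)]
  have hterm2 : ((2*τ : ℕ):ℝ) * (1+65*ζ'*α)^(2*τ) * (144*p*ζ'*α*σ^2) ≤
      ((2*τ : ℕ):ℝ) * 2 * (144*p*ζ'*α*σ^2) := by
    refine mul_le_mul_of_nonneg_right ?_ hB0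
    refine mul_le_mul_of_nonneg_left hPle (by positivity)
  have hterm1 : (1+65*ζ'*α)^(2*τ) * ‖θ0 - θstar‖^2 ≤ 2 * ‖θ0 - θstar‖^2 :=
    mul_le_mul_of_nonneg_right hPle (by positivity)
  calc 𝔼[fun x => ‖θ (2 * τ) x - θstar‖ ^ 2]
      = ∫ x, ‖θ (2*τ) x - θstar‖^2 := rfl
    _ ≤ (1+65*ζ'*α)^(2*τ) * ‖θ0 - θstar‖^2
        + ((2*τ:ℕ):ℝ) * (1+65*ζ'*α)^(2*τ) * (144*p*ζ'*α*σ^2) := hfin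
    _ ≤ 2 * ‖θ0 - θstar‖^2 + p * σ^2 := by linarith
end
end

section
/- (Crude variance bound, valid without mixing) For every k ≥ 0 the averaged QFedTD update direction satisfies E[‖v_k‖₂²] ≤ 64pζ'·E[δ_k²] + 96pζ'σ². -/
open MeasureTheory ProbabilityTheory Finset
open scoped RealInnerProductSpace ProbabilityTheory

noncomputable section

private lemma sq_le_two_sq_add_two_sq {a c d : ℝ} (ha : 0 ≤ a) (hle : a ≤ c + d) :
    a ^ 2 ≤ 2 * c ^ 2 + 2 * d ^ 2 := by
  have h1 : a * a ≤ (c + d) * (c + d) := mul_self_le_mul_self ha hle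
  nlinarith [sq_nonneg (c - d)]

set_option maxHeartbeats 2000000 in
/-- **Crude variance bound, valid without mixing.** -/
theorem stmt11
    (S : Type*) [Fintype S] [Nonempty S] [MeasurableSpace S] (m N : ℕ) (hN : 0 < N)
    (Ω : Type*) [MeasureSpace Ω] [IsProbabilityMeasure (ℙ : Measure Ω)]
    (γ : ℝ) (hγ : γ ∈ Set.Ioo (0 : ℝ) 1)
    (φ : S → EuclideanSpace ℝ (Fin m)) (hφ : ∀ st : S, ‖φ st‖ ≤ 1)
    (hrank : Function.Injective fun θ' : EuclideanSpace ℝ (Fin m) => fun st : S => ⟪φ st, θ'⟫)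
    (P : S → S → ℝ) (hP0 : ∀ st st' : S, 0 ≤ P st st')
    (hP1 : ∀ st : S, ∑ st' : S, P st st' = 1)
    (pidist : S → ℝ) (hpi0 : ∀ st : S, 0 < pidist st) (hpi1 : ∑ st : S, pidist st = 1)
    (hstat : ∀ st' : S, ∑ st : S, pidist st * P st st' = pidist st')
    (R : S → ℝ) (rbar : ℝ) (hrbar : 0 < rbar) (hR : ∀ st : S, |R st| ≤ rbar)
    (ω : ℝ) (hω : ω ∈ Set.Ioo (0 : ℝ) 1)
    (hωmin : ∀ θ' : EuclideanSpace ℝ (Fin m), ω * ‖θ'‖ ^ 2 ≤ ∑ st : S, pidist st * ⟪φ st, θ'⟫ ^ 2)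
    (θstar : EuclideanSpace ℝ (Fin m)) (hθstar : tdBar γ φ P pidist R θstar = 0)
    (σ : ℝ) (hσ : σ = max 1 (max rbar ‖θstar‖))
    (p : ℝ) (hp : p ∈ Set.Ioc (0 : ℝ) 1)
    (ζ : ℝ) (hζ : 0 ≤ ζ) (ζ' : ℝ) (hζ' : ζ' = max 1 ζ)
    (α : ℝ) (hα : α ∈ Set.Ioo (0 : ℝ) 1)
    (q : ℕ) (hq : 2 ≤ q) (τ : ℕ) (hτ : 1 ≤ τ)
    (s : Fin N → ℕ → Ω → S) (hs_meas : ∀ i k, Measurable (s i k))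
    (b : Fin N → ℕ → Ω → ℝ) (hb_meas : ∀ i k, Measurable (b i k))
    (h : Fin N → ℕ → Ω → EuclideanSpace ℝ (Fin m)) (hh_meas : ∀ i k, Measurable (h i k))
    (hh_int : ∀ i k, Integrable (fun x => ‖h i k x‖ ^ 2))
    (o : Fin N → ℕ → Ω → S × ℝ × S)
    (ho : ∀ i k x, o i k x = (s i k x, R (s i k x), s i (k + 1) x))
    (g : Fin N → ℕ → EuclideanSpace ℝ (Fin m) → Ω → EuclideanSpace ℝ (Fin m))
    (hg : ∀ i k θ' x, g i k θ' x = tdDir γ φ θ' (o i k x))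
    (v : ℕ → Ω → EuclideanSpace ℝ (Fin m))
    (hv : ∀ k x, v k x = (N : ℝ)⁻¹ • ∑ i : Fin N, b i k x • h i k x)
    (θ : ℕ → Ω → EuclideanSpace ℝ (Fin m)) (θ0 : EuclideanSpace ℝ (Fin m))
    (hθ0 : ∀ x, θ 0 x = θ0)
    (hθrec : ∀ k x, θ (k + 1) x = θ k x + α • v k x)
    (hmarkov : ∀ (i : Fin N) (k : ℕ) (f : S → ℝ),
      (𝔼[(fun x => f (s i (k + 1) x)) |
          ⨆ (j : ℕ) (_ : j ≤ k), MeasurableSpace.comap (s i j) inferInstance])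
        =ᵐ[ℙ] fun x => ∑ st' : S, P (s i k x) st' * f st')
    (hchains_indep : ProbabilityTheory.iIndep
      (fun i : Fin N => ⨆ k : ℕ, MeasurableSpace.comap (s i k) inferInstance) ℙ)
    (hb01 : ∀ i k x, b i k x = 0 ∨ b i k x = 1)
    (hbp : ∀ i k, (ℙ : Measure Ω) {x | b i k x = 1} = ENNReal.ofReal p)
    (hb_indep : ∀ (i : Fin N) (k : ℕ), ProbabilityTheory.Indep
      (MeasurableSpace.comap (b i k) inferInstance)
      ((⨆ (j : Fin N) (l : ℕ), MeasurableSpace.comap (s j l) inferInstance) ⊔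
        (⨆ (jl : Fin N × ℕ) (_ : jl ≠ (i, k)),
          MeasurableSpace.comap (b jl.1 jl.2) inferInstance) ⊔
        (⨆ (j : Fin N) (l : ℕ) (_ : l ≤ k), MeasurableSpace.comap (h j l) inferInstance)) ℙ)
    (hQmean : ∀ (i : Fin N) (k : ℕ),
      (𝔼[h i k |
          (⨆ (j : Fin N) (l : ℕ), MeasurableSpace.comap (s j l) inferInstance) ⊔
          (⨆ (j : Fin N) (l : ℕ), MeasurableSpace.comap (b j l) inferInstance) ⊔
          (⨆ (j : Fin N) (l : ℕ) (_ : l < k), MeasurableSpace.comap (h j l) inferInstance) ⊔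
          (⨆ (j : Fin N) (_ : j ≠ i), MeasurableSpace.comap (h j k) inferInstance)])
        =ᵐ[ℙ] fun x => g i k (θ k x) x)
    (hQvar : ∀ (i : Fin N) (k : ℕ),
      ∀ᵐ x ∂(ℙ : Measure Ω),
        (𝔼[(fun y => ‖h i k y - g i k (θ k y) y‖ ^ 2) |
            (⨆ (j : Fin N) (l : ℕ), MeasurableSpace.comap (s j l) inferInstance) ⊔
            (⨆ (j : Fin N) (l : ℕ), MeasurableSpace.comap (b j l) inferInstance) ⊔
            (⨆ (j : Fin N) (l : ℕ) (_ : l < k), MeasurableSpace.comap (h j l) inferInstance) ⊔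
            (⨆ (j : Fin N) (_ : j ≠ i), MeasurableSpace.comap (h j k) inferInstance)]) x
          ≤ ζ * ‖g i k (θ k x) x‖ ^ 2)
    (hmix : ∀ (θ' : EuclideanSpace ℝ (Fin m)) (i : Fin N) (k : ℕ), τ ≤ k →
      ∀ᵐ x ∂(ℙ : Measure Ω),
        ‖(𝔼[g i k θ' | MeasurableSpace.comap (o i (k - τ)) inferInstance]) x
          - tdBar γ φ P pidist R θ'‖ ≤ α ^ q * (‖θ'‖ + 1))
    :
    ∀ k : ℕ,
      𝔼[fun x => ‖v k x‖ ^ 2]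
        ≤ 64 * p * ζ' * 𝔼[fun x => ‖θ k x - θstar‖ ^ 2] + 96 * p * ζ' * σ ^ 2 := by
  
  classical
  -- basic facts
  obtain ⟨hγ0, hγ1⟩ := hγ
  obtain ⟨hp0, hp1⟩ := hp
  have hσ1 : (1:ℝ) ≤ σ := by rw [hσ]; exact le_max_left _ _
  have hσr : rbar ≤ σ := by rw [hσ]; exact le_trans (le_max_left _ _) (le_max_right _ _)
  have hσθ : ‖θstar‖ ≤ σ := by rw [hσ]; exact le_trans (le_max_right _ _) (le_max_right _ _)
  have hζ'1 : (1:ℝ) ≤ ζ' := by rw [hζ']; exact le_max_left _ _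
  have hζ'ζ : ζ ≤ ζ' := by rw [hζ']; exact le_max_right _ _
  have hb0 : ∀ i k x, 0 ≤ b i k x := fun i k x => by
    rcases hb01 i k x with h | h <;> rw [h] <;> norm_num
  have hb1 : ∀ i k x, b i k x ≤ 1 := fun i k x => by
    rcases hb01 i k x with h | h <;> rw [h] <;> norm_num
  have hbsq : ∀ i k x, (b i k x) ^ 2 = b i k x := fun i k x => by
    rcases hb01 i k x with h | h <;> rw [h] <;> norm_num
  have hNpos : (0:ℝ) < (N:ℝ) := by exact_mod_cast hN
  -- measurability of v
  have hv_meas : ∀ k, Measurable (v k) := by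
    intro k
    have : v k = fun x => (N:ℝ)⁻¹ • ∑ i : Fin N, b i k x • h i k x := funext (hv k)
    rw [this]
    exact (Finset.measurable_sum Finset.univ
      (fun i _ => (hb_meas i k).smul (hh_meas i k))).const_smul ((N:ℝ)⁻¹)
  -- measurability of θ
  have hθ_meas : ∀ k, Measurable (θ k) := by
    intro k
    induction k with
    | zero =>
      have : θ 0 = fun _ => θ0 := funext hθ0
      rw [this]; exact measurable_const
    | succ k ih =>
      have : θ (k+1) = fun x => θ k x + α • v k x := funext (hθrec k)
      rw [this]
      exact ih.add ((hv_meas k).const_smul α)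
  -- key pointwise bound
  have hA : ∀ k x, ‖v k x‖ ^ 2 ≤ (N:ℝ)⁻¹ * ∑ i : Fin N, b i k x * ‖h i k x‖ ^ 2 := by
    intro k x
    have e1 : ‖v k x‖ = (N:ℝ)⁻¹ * ‖∑ i : Fin N, b i k x • h i k x‖ := by
      rw [hv, norm_smul, Real.norm_eq_abs, abs_of_nonneg (by positivity)]
    have e2 : ‖∑ i : Fin N, b i k x • h i k x‖ ≤ ∑ i : Fin N, b i k x * ‖h i k x‖ := by
      refine (norm_sum_le _ _).trans_eq ?_
      exact Finset.sum_congr rfl fun i _ => by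
        rw [norm_smul, Real.norm_eq_abs, abs_of_nonneg (hb0 i k x)]
    have e3 : (∑ i : Fin N, b i k x * ‖h i k x‖) ^ 2
        ≤ (N:ℝ) * ∑ i : Fin N, b i k x * ‖h i k x‖ ^ 2 := by
      have hcs := sq_sum_le_card_mul_sum_sq (s := (Finset.univ : Finset (Fin N)))
        (f := fun i => b i k x * ‖h i k x‖)
      have h2 : ∀ i : Fin N, (b i k x * ‖h i k x‖) ^ 2 = b i k x * ‖h i k x‖ ^ 2 := by
        intro i; rw [mul_pow, hbsq]
      calc (∑ i : Fin N, b i k x * ‖h i k x‖) ^ 2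
          ≤ ((Finset.univ : Finset (Fin N)).card : ℝ)
              * ∑ i : Fin N, (b i k x * ‖h i k x‖) ^ 2 := hcs
        _ = (N:ℝ) * ∑ i : Fin N, b i k x * ‖h i k x‖ ^ 2 := by
            rw [Finset.card_univ, Fintype.card_fin]
            congr 1
            exact Finset.sum_congr rfl fun i _ => h2 i
    have e4 : ‖v k x‖ ^ 2 ≤ (N:ℝ)⁻¹ ^ 2 * (∑ i : Fin N, b i k x * ‖h i k x‖) ^ 2 := by
      rw [e1, mul_pow]
      have := pow_le_pow_left₀ (norm_nonneg _) e2 2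
      nlinarith [sq_nonneg ((N:ℝ)⁻¹)]
    calc ‖v k x‖ ^ 2 ≤ (N:ℝ)⁻¹ ^ 2 * (∑ i : Fin N, b i k x * ‖h i k x‖) ^ 2 := e4
      _ ≤ (N:ℝ)⁻¹ ^ 2 * ((N:ℝ) * ∑ i : Fin N, b i k x * ‖h i k x‖ ^ 2) := by
          refine mul_le_mul_of_nonneg_left e3 (by positivity)
      _ = (N:ℝ)⁻¹ * ∑ i : Fin N, b i k x * ‖h i k x‖ ^ 2 := by
          rw [pow_two, mul_assoc, inv_mul_cancel_left₀ hNpos.ne']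
  have hA' : ∀ k x, (N:ℝ)⁻¹ * ∑ i : Fin N, b i k x * ‖h i k x‖ ^ 2
      ≤ ∑ i : Fin N, ‖h i k x‖ ^ 2 := by
    intro k x
    have h1 : ∑ i : Fin N, b i k x * ‖h i k x‖ ^ 2 ≤ ∑ i : Fin N, ‖h i k x‖ ^ 2 :=
      Finset.sum_le_sum fun i _ =>
        mul_le_of_le_one_left (sq_nonneg _) (hb1 i k x)
    have h2 : (N:ℝ)⁻¹ ≤ 1 := by
      rw [inv_le_one_iff₀]; right; exact_mod_cast hN
    have h3 : (0:ℝ) ≤ ∑ i : Fin N, b i k x * ‖h i k x‖ ^ 2 :=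
      Finset.sum_nonneg fun i _ => mul_nonneg (hb0 i k x) (sq_nonneg _)
    nlinarith
  -- b * ‖h‖² is integrable
  have hbh_int : ∀ i (k : ℕ), Integrable (fun x => b i k x * ‖h i k x‖ ^ 2) := by
    intro i k
    refine (hh_int i k).mono' ?_ (Filter.Eventually.of_forall fun x => ?_)
    · exact ((hb_meas i k).mul ((hh_meas i k).norm.pow_const 2)).aestronglyMeasurable
    · rw [Real.norm_eq_abs, abs_of_nonneg (mul_nonneg (hb0 i k x) (sq_nonneg _))]
      exact mul_le_of_le_one_left (sq_nonneg _) (hb1 i k x)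
  -- integrability of ‖v k‖²
  have hv_int : ∀ k, Integrable (fun x => ‖v k x‖ ^ 2) := by
    intro k
    refine Integrable.mono' (g := fun x => ∑ i : Fin N, ‖h i k x‖ ^ 2)
      (integrable_finset_sum _ fun i _ => hh_int i k)
      ((hv_meas k).norm.pow_const 2).aestronglyMeasurable
      (Filter.Eventually.of_forall fun x => ?_)
    rw [Real.norm_eq_abs, abs_of_nonneg (sq_nonneg _)]
    exact le_trans (hA k x) (hA' k x)
  -- integrability of ‖θ k‖²
  have hθ_int : ∀ k, Integrable (fun x => ‖θ k x‖ ^ 2) := by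
    intro k
    induction k with
    | zero =>
      have : (fun x => ‖θ 0 x‖ ^ 2) = fun _ => ‖θ0‖ ^ 2 := by
        funext x; rw [hθ0]
      rw [this]; exact integrable_const _
    | succ k ih =>
      refine Integrable.mono' (g := fun x => 2 * ‖θ k x‖ ^ 2 + 2 * ‖v k x‖ ^ 2)
        ((ih.const_mul 2).add ((hv_int k).const_mul 2))
        ((hθ_meas (k+1)).norm.pow_const 2).aestronglyMeasurable
        (Filter.Eventually.of_forall fun x => ?_)
      rw [Real.norm_eq_abs, abs_of_nonneg (sq_nonneg _), hθrec]
      have h1 : ‖θ k x + α • v k x‖ ≤ ‖θ k x‖ + ‖v k x‖ := by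
        refine (norm_add_le _ _).trans ?_
        have : ‖α • v k x‖ = α * ‖v k x‖ := by
          rw [norm_smul, Real.norm_eq_abs, abs_of_nonneg hα.1.le]
        rw [this]
        nlinarith [norm_nonneg (v k x), hα.2.le]
      exact sq_le_two_sq_add_two_sq (norm_nonneg _) h1
  -- now fix k
  intro k
  -- the sigma-algebra of hQmean/hQvar is below the ambient one
  have hG_le : ∀ i : Fin N,
      ((⨆ (j : Fin N) (l : ℕ), MeasurableSpace.comap (s j l) inferInstance) ⊔
        (⨆ (j : Fin N) (l : ℕ), MeasurableSpace.comap (b j l) inferInstance) ⊔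
        (⨆ (j : Fin N) (l : ℕ) (_ : l < k), MeasurableSpace.comap (h j l) inferInstance) ⊔
        (⨆ (j : Fin N) (_ : j ≠ i), MeasurableSpace.comap (h j k) inferInstance))
      ≤ (inferInstance : MeasurableSpace Ω) := by
    intro i
    refine sup_le (sup_le (sup_le ?_ ?_) ?_) ?_
    · exact iSup_le fun j => iSup_le fun l => (hs_meas j l).comap_le
    · exact iSup_le fun j => iSup_le fun l => (hb_meas j l).comap_le
    · exact iSup_le fun j => iSup_le fun l => iSup_le fun _ => (hh_meas j l).comap_le
    · exact iSup_le fun j => iSup_le fun _ => (hh_meas j k).comap_le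
  -- G i := g i k (θ k ·) · is a.e. strongly measurable
  have hG_aesm : ∀ i : Fin N, AEStronglyMeasurable (fun x => g i k (θ k x) x) ℙ := by
    intro i
    exact ((stronglyMeasurable_condExp.mono (hG_le i)).aestronglyMeasurable).congr (hQmean i k)
  have hGsq_aesm : ∀ i : Fin N,
      AEStronglyMeasurable (fun x => ‖g i k (θ k x) x‖ ^ 2) ℙ := by
    intro i
    have : (fun x => ‖g i k (θ k x) x‖ ^ 2)
        = fun x => ‖g i k (θ k x) x‖ * ‖g i k (θ k x) x‖ := by
      funext x; ring
    rw [this]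
    exact (hG_aesm i).norm.mul (hG_aesm i).norm
  -- pointwise norm bound on g
  have hgb : ∀ (i : Fin N) (θ' : EuclideanSpace ℝ (Fin m)) x,
      ‖g i k θ' x‖ ≤ rbar + 2 * ‖θ'‖ := by
    intro i θ' x
    rw [hg, ho]
    show ‖(R (s i k x) + γ * ⟪φ (s i (k+1) x), θ'⟫ - ⟪φ (s i k x), θ'⟫) • φ (s i k x)‖
      ≤ rbar + 2 * ‖θ'‖
    rw [norm_smul, Real.norm_eq_abs]
    have h1 : ‖φ (s i k x)‖ ≤ 1 := hφ _
    have h2 : |⟪φ (s i (k+1) x), θ'⟫| ≤ ‖θ'‖ := by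
      refine (abs_real_inner_le_norm _ _).trans ?_
      have := hφ (s i (k+1) x)
      nlinarith [norm_nonneg θ']
    have h3 : |⟪φ (s i k x), θ'⟫| ≤ ‖θ'‖ := by
      refine (abs_real_inner_le_norm _ _).trans ?_
      have := hφ (s i k x)
      nlinarith [norm_nonneg θ']
    have h4 : |R (s i k x)| ≤ rbar := hR _
    have key : |R (s i k x) + γ * ⟪φ (s i (k+1) x), θ'⟫ - ⟪φ (s i k x), θ'⟫|
        ≤ rbar + 2 * ‖θ'‖ := by
      have e2 := abs_le.mp h2
      have e3 := abs_le.mp h3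
      have e4 := abs_le.mp h4
      rw [abs_le]
      constructor <;> nlinarith [norm_nonneg θ']
    nlinarith [abs_nonneg (R (s i k x) + γ * ⟪φ (s i (k+1) x), θ'⟫ - ⟪φ (s i k x), θ'⟫),
      norm_nonneg (φ (s i k x))]
  -- integrability of ‖G‖² and ‖h - G‖²
  have hG_int : ∀ i : Fin N, Integrable (fun x => ‖g i k (θ k x) x‖ ^ 2) := by
    intro i
    refine Integrable.mono' (g := fun x => 2 * rbar ^ 2 + 8 * ‖θ k x‖ ^ 2)
      ((integrable_const _).add ((hθ_int k).const_mul 8)) (hGsq_aesm i)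
      (Filter.Eventually.of_forall fun x => ?_)
    rw [Real.norm_eq_abs, abs_of_nonneg (sq_nonneg _)]
    have h2 : ‖g i k (θ k x) x‖ ≤ rbar + 2 * ‖θ k x‖ := hgb i (θ k x) x
    have h3 := sq_le_two_sq_add_two_sq (norm_nonneg (g i k (θ k x) x)) h2
    have h4 : ‖g i k (θ k x) x‖ ^ 2 ≤ 2 * rbar ^ 2 + 8 * ‖θ k x‖ ^ 2 := by nlinarith [h3]
    exact h4
  have hhG_int : ∀ i : Fin N,
      Integrable (fun y => ‖h i k y - g i k (θ k y) y‖ ^ 2) := by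
    intro i
    have aesm : AEStronglyMeasurable (fun y => ‖h i k y - g i k (θ k y) y‖ ^ 2) ℙ := by
      have base : AEStronglyMeasurable (fun y => h i k y - g i k (θ k y) y) ℙ :=
        (hh_meas i k).aestronglyMeasurable.sub (hG_aesm i)
      have : (fun y => ‖h i k y - g i k (θ k y) y‖ ^ 2)
          = fun y => ‖h i k y - g i k (θ k y) y‖ * ‖h i k y - g i k (θ k y) y‖ := by
        funext y; ring
      rw [this]
      exact base.norm.mul base.norm
    refine Integrable.mono'
      (g := fun y => 2 * ‖h i k y‖ ^ 2 + 2 * ‖g i k (θ k y) y‖ ^ 2)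
      (((hh_int i k).const_mul 2).add ((hG_int i).const_mul 2)) aesm
      (Filter.Eventually.of_forall fun y => ?_)
    rw [Real.norm_eq_abs, abs_of_nonneg (sq_nonneg _)]
    have h2 := norm_sub_le (h i k y) (g i k (θ k y) y)
    exact sq_le_two_sq_add_two_sq (norm_nonneg _) h2
  -- quantization variance: ∫‖h-G‖² ≤ ζ ∫‖G‖²
  have hvar : ∀ i : Fin N,
      ∫ y, ‖h i k y - g i k (θ k y) y‖ ^ 2 ≤ ζ * ∫ x, ‖g i k (θ k x) x‖ ^ 2 := by
    intro i
    have h1 := integral_condExp (μ := (ℙ : Measure Ω))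
      (f := fun y => ‖h i k y - g i k (θ k y) y‖ ^ 2) (hG_le i)
    calc ∫ y, ‖h i k y - g i k (θ k y) y‖ ^ 2
        = ∫ x, (𝔼[(fun y => ‖h i k y - g i k (θ k y) y‖ ^ 2) |
            (⨆ (j : Fin N) (l : ℕ), MeasurableSpace.comap (s j l) inferInstance) ⊔
            (⨆ (j : Fin N) (l : ℕ), MeasurableSpace.comap (b j l) inferInstance) ⊔
            (⨆ (j : Fin N) (l : ℕ) (_ : l < k), MeasurableSpace.comap (h j l) inferInstance) ⊔
            (⨆ (j : Fin N) (_ : j ≠ i), MeasurableSpace.comap (h j k) inferInstance)]) x := h1.symm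
      _ ≤ ∫ x, ζ * ‖g i k (θ k x) x‖ ^ 2 :=
          integral_mono_ae integrable_condExp ((hG_int i).const_mul ζ) (hQvar i k)
      _ = ζ * ∫ x, ‖g i k (θ k x) x‖ ^ 2 := integral_const_mul ζ _
  -- ∫‖h‖² ≤ (2ζ+2) ∫‖G‖²
  have hh_le : ∀ i : Fin N,
      ∫ x, ‖h i k x‖ ^ 2 ≤ (2 * ζ + 2) * ∫ x, ‖g i k (θ k x) x‖ ^ 2 := by
    intro i
    have e : ∫ x, ‖h i k x‖ ^ 2
        ≤ ∫ x, (2 * ‖h i k x - g i k (θ k x) x‖ ^ 2 + 2 * ‖g i k (θ k x) x‖ ^ 2) := by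
      refine integral_mono (hh_int i k)
        (((hhG_int i).const_mul 2).add ((hG_int i).const_mul 2)) fun x => ?_
      have h2 : ‖h i k x‖ ≤ ‖h i k x - g i k (θ k x) x‖ + ‖g i k (θ k x) x‖ := by
        have h3 := norm_add_le (h i k x - g i k (θ k x) x) (g i k (θ k x) x)
        simpa using h3
      have h4 := sq_le_two_sq_add_two_sq (norm_nonneg (h i k x)) h2
      linarith
    rw [integral_add ((hhG_int i).const_mul 2) ((hG_int i).const_mul 2),
      integral_const_mul, integral_const_mul] at e
    have := hvar i
    linarith
  -- ∫‖G‖² ≤ 8 ∫δ² + 18 σ²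
  have hδ_int : Integrable (fun x => ‖θ k x - θstar‖ ^ 2) := by
    refine Integrable.mono' (g := fun x => 2 * ‖θ k x‖ ^ 2 + 2 * ‖θstar‖ ^ 2)
      (((hθ_int k).const_mul 2).add (integrable_const _))
      (((hθ_meas k).sub measurable_const).norm.pow_const 2).aestronglyMeasurable
      (Filter.Eventually.of_forall fun x => ?_)
    rw [Real.norm_eq_abs, abs_of_nonneg (sq_nonneg _)]
    have h2 := norm_sub_le (θ k x) θstar
    exact sq_le_two_sq_add_two_sq (norm_nonneg _) h2
  have hGδ : ∀ i : Fin N,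
      ∫ x, ‖g i k (θ k x) x‖ ^ 2
        ≤ 8 * (∫ x, ‖θ k x - θstar‖ ^ 2) + 18 * σ ^ 2 := by
    intro i
    have e : ∫ x, ‖g i k (θ k x) x‖ ^ 2
        ≤ ∫ x, (8 * ‖θ k x - θstar‖ ^ 2 + 18 * σ ^ 2) := by
      refine integral_mono (hG_int i)
        ((hδ_int.const_mul 8).add (integrable_const _)) fun x => ?_
      have h1 := hgb i (θ k x) x
      have h2 : ‖θ k x‖ - ‖θstar‖ ≤ ‖θ k x - θstar‖ := norm_sub_norm_le _ _
      have h3 : ‖g i k (θ k x) x‖ ≤ 2 * ‖θ k x - θstar‖ + 3 * σ := by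
        linarith [hσr, hσθ]
      have h4 := sq_le_two_sq_add_two_sq (norm_nonneg (g i k (θ k x) x)) h3
      nlinarith [h4]
    have e2 : ∫ x, (8 * ‖θ k x - θstar‖ ^ 2 + 18 * σ ^ 2)
        = 8 * (∫ x, ‖θ k x - θstar‖ ^ 2) + 18 * σ ^ 2 := by
      rw [integral_add (hδ_int.const_mul 8) (integrable_const _), integral_const_mul,
        integral_const]
      simp [measure_univ]
    linarith [e, e2]
  -- independence: E[b ‖h‖²] = p E[‖h‖²]
  have hBint : ∀ i : Fin N,
      ∫ x, b i k x * ‖h i k x‖ ^ 2 = p * ∫ x, ‖h i k x‖ ^ 2 := by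
    intro i
    have hind : IndepFun (b i k) (fun x => ‖h i k x‖ ^ 2) ℙ := by
      rw [IndepFun_iff_Indep]
      refine indep_of_indep_of_le_right (hb_indep i k) ?_
      have hcomp : (fun x => ‖h i k x‖ ^ 2)
          = (fun y : EuclideanSpace ℝ (Fin m) => ‖y‖ ^ 2) ∘ (h i k) := rfl
      have hle1 : MeasurableSpace.comap (fun x => ‖h i k x‖ ^ 2) inferInstance
          ≤ MeasurableSpace.comap (h i k) inferInstance := by
        rw [hcomp, ← MeasurableSpace.comap_comp]
        exact MeasurableSpace.comap_mono (measurable_norm.pow_const 2).comap_le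
      refine hle1.trans (le_trans ?_ le_sup_right)
      exact le_iSup_of_le i (le_iSup_of_le k (le_iSup_of_le (le_refl k) le_rfl))
    have hEb : ∫ x, b i k x = p := by
      have hset : MeasurableSet {x | b i k x = 1} :=
        (hb_meas i k) (measurableSet_singleton 1)
      have hbind : (fun x => b i k x)
          = Set.indicator {x | b i k x = 1} (fun _ => (1:ℝ)) := by
        funext x
        rcases hb01 i k x with hx | hx
        · rw [hx, Set.indicator_of_notMem]
          simp only [Set.mem_setOf_eq, hx]
          norm_num
        · rw [hx, Set.indicator_of_mem]
          simp only [Set.mem_setOf_eq, hx]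
      rw [hbind]
      have := integral_indicator_one (μ := (ℙ : Measure Ω)) hset
      rw [show (fun _ : Ω => (1:ℝ)) = 1 from rfl, this, measureReal_def, hbp i k, ENNReal.toReal_ofReal hp0.le]
    have := hind.integral_mul_eq_mul_integral (hb_meas i k).aestronglyMeasurable
      ((hh_meas i k).norm.pow_const 2).aestronglyMeasurable
    calc ∫ x, b i k x * ‖h i k x‖ ^ 2
        = ∫ x, ((b i k) * fun x => ‖h i k x‖ ^ 2) x := rfl
      _ = (∫ x, b i k x) * ∫ x, ‖h i k x‖ ^ 2 := this
      _ = p * ∫ x, ‖h i k x‖ ^ 2 := by rw [hEb]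
  -- put everything together
  set A : ℝ := ∫ x, ‖θ k x - θstar‖ ^ 2 with hAdef
  have hA0 : 0 ≤ A := integral_nonneg fun x => sq_nonneg _
  have hhfin : ∀ i : Fin N,
      ∫ x, ‖h i k x‖ ^ 2 ≤ (2 * ζ + 2) * (8 * A + 18 * σ ^ 2) := by
    intro i
    refine (hh_le i).trans ?_
    have := hGδ i
    have hG0 : 0 ≤ ∫ x, ‖g i k (θ k x) x‖ ^ 2 := integral_nonneg fun x => sq_nonneg _
    nlinarith
  calc 𝔼[fun x => ‖v k x‖ ^ 2]
      ≤ ∫ x, (N:ℝ)⁻¹ * ∑ i : Fin N, b i k x * ‖h i k x‖ ^ 2 := by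
        refine integral_mono_of_nonneg (Filter.Eventually.of_forall fun x => sq_nonneg _)
          (((integrable_finset_sum _ fun i _ => hbh_int i k).const_mul _))
          (Filter.Eventually.of_forall fun x => hA k x)
    _ = (N:ℝ)⁻¹ * ∑ i : Fin N, ∫ x, b i k x * ‖h i k x‖ ^ 2 := by
        rw [integral_const_mul, integral_finset_sum _ fun i _ => hbh_int i k]
    _ = (N:ℝ)⁻¹ * ∑ i : Fin N, p * ∫ x, ‖h i k x‖ ^ 2 := by
        rw [Finset.sum_congr rfl fun i _ => hBint i]
    _ ≤ (N:ℝ)⁻¹ * ∑ i : Fin N, p * ((2 * ζ + 2) * (8 * A + 18 * σ ^ 2)) := by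
        refine mul_le_mul_of_nonneg_left (Finset.sum_le_sum fun i _ => ?_) (by positivity)
        exact mul_le_mul_of_nonneg_left (hhfin i) hp0.le
    _ = p * ((2 * ζ + 2) * (8 * A + 18 * σ ^ 2)) := by
        rw [Finset.sum_const, Finset.card_univ, Fintype.card_fin, nsmul_eq_mul]
        field_simp
    _ ≤ 64 * p * ζ' * A + 96 * p * ζ' * σ ^ 2 := by
        nlinarith [mul_nonneg hp0.le hA0, mul_nonneg hp0.le (sq_nonneg σ),
          mul_nonneg (mul_nonneg hp0.le hA0) (sub_nonneg.mpr hζ'ζ),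
          mul_nonneg (mul_nonneg hp0.le (sq_nonneg σ)) (sub_nonneg.mpr hζ'ζ),
          mul_nonneg (mul_nonneg hp0.le (sq_nonneg σ)) (sub_nonneg.mpr hζ'1),
          mul_nonneg (mul_nonneg hp0.le hA0) (sub_nonneg.mpr hζ'1)]
end
end
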